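/- Let H be a graph that has a dominating system, and let 𝒟 be a dominating system of H of minimum cardinality. Then any two distinct closed trails in 𝒟 are vertex-disjoint. -/

import Mathlib

/-- A subgraph `D` of `H` is a closed trail of `H` if it is the subgraph traced out by
a closed walk of `H` that repeats no edge. -/
def IsClosedTrailSubgraph {V : Type*} (H : SimpleGraph V) (D : H.Subgraph) : Prop :=
  ∃ (v : V) (w : H.Walk v v), w.IsTrail ∧ D = w.toSubgraph

/-- A subgraph `D` of `H` is a star with at least three edges with center `c` if every
vertex of `D` other than `c` is a neighbor of `c`, every edge of `D` is incident with
`c`, and `D` has at least three edges. -/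
def IsStarWithCenter {V : Type*} (H : SimpleGraph V) (D : H.Subgraph) (c : V) : Prop :=
  c ∈ D.verts ∧ (∀ v ∈ D.verts, v = c ∨ D.Adj c v) ∧
    (∀ e ∈ D.edgeSet, c ∈ e) ∧ 3 ≤ D.edgeSet.ncard

/-- A subgraph `D` of `H` is a star with at least three edges. -/
def IsBigStarSubgraph {V : Type*} (H : SimpleGraph V) (D : H.Subgraph) : Prop :=
  ∃ c : V, IsStarWithCenter H D c

/-- A dominating system of `H` is a finite set `𝒟` of pairwise edge-disjoint subgraphs
of `H`, each of which is either a closed trail or a star with at least three edges,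
such that every edge of `H` not belonging to any member of `𝒟` has at least one
endpoint lying on a closed trail in `𝒟`. -/
def IsDomSystem {V : Type*} (H : SimpleGraph V) (𝒟 : Set H.Subgraph) : Prop :=
  𝒟.Finite ∧
    (∀ D ∈ 𝒟, ∀ D' ∈ 𝒟, D ≠ D' → D.edgeSet ∩ D'.edgeSet = ∅) ∧
    (∀ D ∈ 𝒟, IsClosedTrailSubgraph H D ∨ IsBigStarSubgraph H D) ∧
    ∀ e ∈ H.edgeSet, (∀ D ∈ 𝒟, e ∉ D.edgeSet) →
      ∃ D ∈ 𝒟, IsClosedTrailSubgraph H D ∧ ∃ v, v ∈ e ∧ v ∈ D.verts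

/-- Let `𝒟` be a dominating system of `H` of minimum cardinality.  Then any two
distinct closed trails in `𝒟` are vertex-disjoint. -/
theorem min_dom_system_closed_trails_vertex_disjoint
    {V : Type*} [Fintype V] (H : SimpleGraph V) (𝒟 : Set H.Subgraph)
    (hdom : IsDomSystem H 𝒟)
    (hmin : ∀ 𝒟' : Set H.Subgraph, IsDomSystem H 𝒟' → 𝒟.ncard ≤ 𝒟'.ncard) :
    ∀ D ∈ 𝒟, ∀ D' ∈ 𝒟, IsClosedTrailSubgraph H D → IsClosedTrailSubgraph H D' →
      D ≠ D' → D.verts ∩ D'.verts = ∅ := by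
  classical
  rintro D hD D' hD' ⟨v, w, hw, rfl⟩ ⟨v', w', hw', hDe'⟩ hne
  by_contra hcon
  obtain ⟨x, hx1, hx2⟩ := Set.nonempty_iff_ne_empty.mpr hcon
  subst hDe'
  obtain ⟨hfin, hdisj, htyp, hcov⟩ := hdom
  rw [SimpleGraph.Walk.mem_verts_toSubgraph] at hx1 hx2
  -- rotate both walks to start at x and append
  set w1 := w.rotate x hx1 with hw1def
  set w2 := w'.rotate x hx2 with hw2def
  have ht1 : w1.IsTrail := hw.rotate hx1
  have ht2 : w2.IsTrail := hw'.rotate hx2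
  have hts1 : w1.toSubgraph = w.toSubgraph := w.toSubgraph_rotate hx1
  have hts2 : w2.toSubgraph = w'.toSubgraph := w'.toSubgraph_rotate hx2
  set wc := w1.append w2 with hwcdef
  have hedisj : w.toSubgraph.edgeSet ∩ w'.toSubgraph.edgeSet = ∅ :=
    hdisj _ hD _ hD' hne
  have htc : wc.IsTrail := by
    rw [SimpleGraph.Walk.isTrail_def, SimpleGraph.Walk.edges_append, List.nodup_append]
    refine ⟨ht1.edges_nodup, ht2.edges_nodup, fun e he1 e' he2 hee => ?_⟩
    subst hee
    have h1 : e ∈ w.toSubgraph.edgeSet := by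
      rw [← hts1, SimpleGraph.Walk.edgeSet_toSubgraph]; exact he1
    have h2 : e ∈ w'.toSubgraph.edgeSet := by
      rw [← hts2, SimpleGraph.Walk.edgeSet_toSubgraph]; exact he2
    exact Set.eq_empty_iff_forall_notMem.mp hedisj e ⟨h1, h2⟩
  have htsc : wc.toSubgraph = w.toSubgraph ⊔ w'.toSubgraph := by
    rw [hwcdef, SimpleGraph.Walk.toSubgraph_append, hts1, hts2]
  set E := w.toSubgraph ⊔ w'.toSubgraph with hEdef
  have hEct : IsClosedTrailSubgraph H E := ⟨x, wc, htc, htsc.symm⟩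
  have hEedge : E.edgeSet = w.toSubgraph.edgeSet ∪ w'.toSubgraph.edgeSet := by
    simp [hEdef]
  set 𝒟' := insert E (𝒟 \ {w.toSubgraph, w'.toSubgraph}) with h𝒟'
  have hdom' : IsDomSystem H 𝒟' := by
    refine ⟨hfin.diff.insert _, ?_, ?_, ?_⟩
    · -- pairwise edge-disjoint
      rintro A hA B hB hAB
      have key : ∀ C ∈ 𝒟, C ≠ w.toSubgraph → C ≠ w'.toSubgraph →
          C.edgeSet ∩ E.edgeSet = ∅ := by
        intro C hC h1 h2
        rw [hEedge, Set.inter_union_distrib_left, hdisj _ hC _ hD h1,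
          hdisj _ hC _ hD' h2, Set.union_empty]
      rcases hA with rfl | ⟨hA, hA2⟩ <;> rcases hB with rfl | ⟨hB, hB2⟩
      · exact absurd rfl hAB
      · simp only [Set.mem_insert_iff, Set.mem_singleton_iff, not_or] at hB2
        rw [Set.inter_comm]; exact key _ hB hB2.1 hB2.2
      · simp only [Set.mem_insert_iff, Set.mem_singleton_iff, not_or] at hA2
        exact key _ hA hA2.1 hA2.2
      · exact hdisj _ hA _ hB hAB
    · rintro A (rfl | ⟨hA, _⟩)
      · exact Or.inl hEct
      · exact htyp _ hA
    · intro e he hne'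
      have hnotE : e ∉ E.edgeSet := hne' E (Set.mem_insert _ _)
      rw [hEedge] at hnotE
      simp only [Set.mem_union, not_or] at hnotE
      obtain ⟨F, hF, hFct, y, hy1, hy2⟩ := hcov e he (by
        intro C hC
        by_cases h1 : C = w.toSubgraph
        · exact h1 ▸ hnotE.1
        by_cases h2 : C = w'.toSubgraph
        · exact h2 ▸ hnotE.2
        · exact hne' C (Set.mem_insert_of_mem _ ⟨hC, by simp [h1, h2]⟩))
      by_cases h1 : F = w.toSubgraph
      · exact ⟨E, Set.mem_insert _ _, hEct, y, hy1, Or.inl (h1 ▸ hy2)⟩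
      by_cases h2 : F = w'.toSubgraph
      · exact ⟨E, Set.mem_insert _ _, hEct, y, hy1, Or.inr (h2 ▸ hy2)⟩
      · exact ⟨F, Set.mem_insert_of_mem _ ⟨hF, by simp [h1, h2]⟩, hFct, y, hy1, hy2⟩
  have hle := hmin 𝒟' hdom'
  have hsub : {w.toSubgraph, w'.toSubgraph} ⊆ 𝒟 := by
    rintro C (rfl | rfl)
    exacts [hD, hD']
  have hcard2 : ({w.toSubgraph, w'.toSubgraph} : Set H.Subgraph).ncard = 2 :=
    Set.ncard_pair hne
  have hdcard : (𝒟 \ {w.toSubgraph, w'.toSubgraph}).ncard = 𝒟.ncard - 2 := by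
    rw [Set.ncard_diff hsub ((Set.finite_singleton _).insert _), hcard2]
  have h2le : 2 ≤ 𝒟.ncard := by
    calc 2 = ({w.toSubgraph, w'.toSubgraph} : Set H.Subgraph).ncard := hcard2.symm
    _ ≤ 𝒟.ncard := Set.ncard_le_ncard hsub hfin
  have : 𝒟'.ncard ≤ 𝒟.ncard - 1 := by
    calc 𝒟'.ncard ≤ (𝒟 \ {w.toSubgraph, w'.toSubgraph}).ncard + 1 :=
          Set.ncard_insert_le _ _
    _ = 𝒟.ncard - 2 + 1 := by rw [hdcard]
    _ = 𝒟.ncard - 1 := by omega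
  omega
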